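/- For every integer k ≥ 0 and every real r with 0 ≤ r ≤ 1, the integral ∫₀^π (sin θ)^k / (1 + r² − 2r cos θ)^{k/2} dθ equals ω_{k+2}/ω_{k+1}, where ω_m denotes the surface area of the unit sphere S^{m−1} in ℝ^m (with the convention ω_1 = 2). -/

import Mathlib

open Real MeasureTheory intervalIntegral

/-- Surface area of the unit sphere in ℝ^m: ω_m = 2 π^{m/2} / Γ(m/2). -/
noncomputable def sphereArea (m : ℕ) : ℝ :=
  2 * Real.pi ^ ((m : ℝ) / 2) / Real.Gamma ((m : ℝ) / 2)

lemma gamma_ratio (k : ℕ) :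
    ∫ θ in (0:ℝ)..π, Real.sin θ ^ k
      = Real.sqrt π * Real.Gamma (((k:ℝ)+1)/2) / Real.Gamma (((k:ℝ)+2)/2) := by
  induction k using Nat.twoStepInduction with
  | zero =>
      have h1 : (((0:ℕ):ℝ)+1)/2 = 1/2 := by norm_num
      have h2 : (((0:ℕ):ℝ)+2)/2 = 1 := by norm_num
      rw [h1, h2, Real.Gamma_one, Real.Gamma_one_half_eq]
      simp [Real.mul_self_sqrt Real.pi_pos.le]
  | one =>
      have h32 : Real.Gamma ((3:ℝ)/2) = Real.sqrt π / 2 := by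
        rw [show (3:ℝ)/2 = 1/2 + 1 by norm_num, Real.Gamma_add_one (by norm_num),
          Real.Gamma_one_half_eq]
        ring
      have h1 : (((1:ℕ):ℝ)+1)/2 = 1 := by norm_num
      have h2 : (((1:ℕ):ℝ)+2)/2 = 3/2 := by norm_num
      rw [h1, h2, Real.Gamma_one, h32]
      simp only [pow_one, integral_sin, Real.cos_zero, Real.cos_pi]
      have hs : Real.sqrt π ≠ 0 := by positivity
      field_simp
      ring
  | more n ih _ =>
      have hrec : (∫ x in (0:ℝ)..π, Real.sin x ^ (n+2))
          = ((n:ℝ)+1)/((n:ℝ)+2) * ∫ x in (0:ℝ)..π, Real.sin x ^ n := by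
        rw [integral_sin_pow]
        simp
      have h1 : Real.Gamma (((n:ℝ)+2+1)/2) = (((n:ℝ)+1)/2) * Real.Gamma (((n:ℝ)+1)/2) := by
        rw [show ((n:ℝ)+2+1)/2 = ((n:ℝ)+1)/2 + 1 by ring, Real.Gamma_add_one (by positivity)]
      have h2 : Real.Gamma (((n:ℝ)+2+2)/2) = (((n:ℝ)+2)/2) * Real.Gamma (((n:ℝ)+2)/2) := by
        rw [show ((n:ℝ)+2+2)/2 = ((n:ℝ)+2)/2 + 1 by ring, Real.Gamma_add_one (by positivity)]
      have hG1 : Real.Gamma (((n:ℝ)+1)/2) ≠ 0 := (Real.Gamma_pos_of_pos (by positivity)).ne'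
      have hG2 : Real.Gamma (((n:ℝ)+2)/2) ≠ 0 := (Real.Gamma_pos_of_pos (by positivity)).ne'
      push_cast
      push_cast at hrec ih
      rw [hrec, ih, h1, h2]
      have hn2 : ((n:ℝ)+2) ≠ 0 := by positivity
      field_simp

lemma sphere_div (k : ℕ) :
    sphereArea (k+2) / sphereArea (k+1)
      = Real.sqrt π * Real.Gamma (((k:ℝ)+1)/2) / Real.Gamma (((k:ℝ)+2)/2) := by
  unfold sphereArea
  have hπ := Real.pi_pos
  push_cast
  rw [show ((k:ℝ)+2)/2 = ((k:ℝ)+1)/2 + 1/2 by ring, Real.rpow_add hπ, Real.sqrt_eq_rpow]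
  have hG1 : Real.Gamma (((k:ℝ)+1)/2) ≠ 0 := (Real.Gamma_pos_of_pos (by positivity)).ne'
  have hG2 : Real.Gamma (((k:ℝ)+2)/2) ≠ 0 := (Real.Gamma_pos_of_pos (by positivity)).ne'
  have hp1 : (Real.pi : ℝ) ^ (((k:ℝ)+1)/2) ≠ 0 := by positivity
  have hp2 : (Real.pi : ℝ) ^ ((1:ℝ)/2) ≠ 0 := by positivity
  rw [show ((k:ℝ)+2)/2 = ((k:ℝ)+1)/2 + 1/2 by ring] at hG2
  field_simp

lemma sin_pow_integral (k : ℕ) :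
    ∫ θ in (0:ℝ)..π, Real.sin θ ^ k = sphereArea (k+2) / sphereArea (k+1) := by
  rw [gamma_ratio, sphere_div]

lemma rpow_sq_half (y : ℝ) (hy : 0 ≤ y) (k : ℕ) : ((y^2 : ℝ)) ^ ((k:ℝ)/2) = y ^ k := by
  rw [← Real.rpow_natCast y 2, ← Real.rpow_mul hy,
    show ((2:ℕ):ℝ) * ((k:ℝ)/2) = (k:ℝ) by push_cast; ring, Real.rpow_natCast]

lemma half_integral (k : ℕ) :
    ∫ θ in (0:ℝ)..π, Real.sin θ ^ k = 2 * ∫ θ in (0:ℝ)..(π/2), Real.sin θ ^ k := by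
  have hi : ∀ a b : ℝ, IntervalIntegrable (fun y => Real.sin y ^ k) volume a b :=
    fun a b => (Real.continuous_sin.pow k).intervalIntegrable a b
  have h2 : ∫ x in (π/2)..π, Real.sin x ^ k = ∫ x in (0:ℝ)..(π/2), Real.sin x ^ k := by
    have := intervalIntegral.integral_comp_sub_left (a := (0:ℝ)) (b := π/2)
      (fun y => Real.sin y ^ k) π
    simp only [Real.sin_pi_sub] at this
    rw [this, show π - π/2 = π/2 by ring, sub_zero]
  have h3 := intervalIntegral.integral_add_adjacent_intervals (a := (0:ℝ)) (b := π/2) (c := π)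
    (hi 0 (π/2)) (hi (π/2) π)
  rw [← h3, h2]
  ring

lemma case_r_one (k : ℕ) :
    ∫ θ in (0:ℝ)..π, Real.sin θ ^ k / (1 + (1:ℝ)^2 - 2*1*Real.cos θ) ^ ((k:ℝ)/2)
      = ∫ θ in (0:ℝ)..π, Real.sin θ ^ k := by
  have h1 : ∫ θ in (0:ℝ)..π, Real.sin θ ^ k / (1 + (1:ℝ)^2 - 2*1*Real.cos θ) ^ ((k:ℝ)/2)
      = ∫ θ in (0:ℝ)..π, Real.cos (θ/2) ^ k := by
    apply intervalIntegral.integral_congr_ae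
    apply MeasureTheory.ae_of_all
    intro x hx
    rw [Set.uIoc_of_le Real.pi_pos.le] at hx
    obtain ⟨hx0, hxπ⟩ := hx
    have hs : 0 < Real.sin (x/2) :=
      Real.sin_pos_of_pos_of_lt_pi (by linarith) (by linarith [Real.pi_pos])
    have hbase : 1 + (1:ℝ)^2 - 2*1*Real.cos x = (2 * Real.sin (x/2))^2 := by
      have hc : Real.cos x = 2 * Real.cos (x/2)^2 - 1 := by
        have h2 := Real.cos_two_mul (x/2)
        rw [show 2*(x/2) = x by ring] at h2
        linarith
      have hsc := Real.sin_sq_add_cos_sq (x/2)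
      nlinarith
    have hnum : Real.sin x = 2 * Real.sin (x/2) * Real.cos (x/2) := by
      rw [show x = 2 * (x/2) by ring, Real.sin_two_mul]
      ring_nf
    have h2s : ((2:ℝ)*Real.sin (x/2))^k ≠ 0 := by positivity
    rw [hbase, hnum, rpow_sq_half _ (by positivity), mul_pow, mul_div_cancel_left₀ _ h2s]
  rw [h1]
  have h2 : ∫ θ in (0:ℝ)..π, Real.cos (θ/2) ^ k
      = (2:ℝ) • ∫ y in (0:ℝ)..(π/2), Real.cos y ^ k := by
    have := intervalIntegral.integral_comp_div (a := (0:ℝ)) (b := π)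
      (f := fun y => Real.cos y ^ k) (c := (2:ℝ)) (by norm_num)
    rw [this]
    norm_num
  have h3 : ∫ y in (0:ℝ)..(π/2), Real.cos y ^ k = ∫ y in (0:ℝ)..(π/2), Real.sin y ^ k := by
    have := intervalIntegral.integral_comp_sub_left (a := (0:ℝ)) (b := π/2)
      (fun y => Real.sin y ^ k) (π/2)
    simp only [Real.sin_pi_div_two_sub] at this
    rw [this, show π/2 - π/2 = (0:ℝ) by ring, sub_zero]
  rw [h2, h3, half_integral k, smul_eq_mul]

lemma key_pointwise (k : ℕ) (r : ℝ) (hr0 : 0 ≤ r) (hr1 : r < 1) {φ : ℝ}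
    (hφ : φ ∈ Set.uIcc (0:ℝ) π) :
    (1 - r * Real.cos φ / Real.sqrt (1 - (r * Real.sin φ)^2)) *
      (Real.sin (φ - Real.arcsin (r * Real.sin φ)) ^ k /
        (1 + r^2 - 2*r*Real.cos (φ - Real.arcsin (r * Real.sin φ))) ^ ((k:ℝ)/2))
    = Real.sin φ ^ k - r * (Real.sin φ ^ k * Real.cos φ / Real.sqrt (1 - (r*Real.sin φ)^2)) := by
  rw [Set.uIcc_of_le Real.pi_pos.le] at hφ
  obtain ⟨hφ0, hφπ⟩ := hφ
  set s := Real.sin φ with hs_def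
  set c := Real.cos φ with hc_def
  have hs0 : 0 ≤ s := Real.sin_nonneg_of_nonneg_of_le_pi hφ0 hφπ
  have hsc : s^2 + c^2 = 1 := Real.sin_sq_add_cos_sq φ
  have hA2 : 0 < 1 - (r*s)^2 := by nlinarith [sq_nonneg c, sq_nonneg (r*s), sq_nonneg r, sq_nonneg s]
  set A := Real.sqrt (1 - (r*s)^2) with hA_def
  have hA0 : 0 < A := Real.sqrt_pos.mpr hA2
  have hAsq : A^2 = 1 - (r*s)^2 := Real.sq_sqrt hA2.le
  have hb1 : -1 ≤ r * s := by nlinarith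
  have hb2 : r * s ≤ 1 := by nlinarith
  have hsin_arc : Real.sin (Real.arcsin (r*s)) = r*s := Real.sin_arcsin hb1 hb2
  have hcos_arc : Real.cos (Real.arcsin (r*s)) = A := by rw [Real.cos_arcsin]
  have hsinθ : Real.sin (φ - Real.arcsin (r*s)) = s * (A - r*c) := by
    rw [Real.sin_sub, hsin_arc, hcos_arc]; ring
  have hcosθ : Real.cos (φ - Real.arcsin (r*s)) = c * A + s * (r*s) := by
    rw [Real.cos_sub, hsin_arc, hcos_arc]
  have hdiff : (A - r*c) * (A + r*c) = 1 - r^2 := by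
    linear_combination hAsq - r^2 * hsc
  have h1r : 0 < 1 - r^2 := by nlinarith
  have hApos : 0 < A - r*c := by
    rcases le_or_gt (r*c) 0 with h | h
    · linarith
    · nlinarith
  have hD : 1 + r^2 - 2*r*Real.cos (φ - Real.arcsin (r*s)) = (A - r*c)^2 := by
    rw [hcosθ]
    linear_combination -hAsq - r^2 * hsc
  rw [hsinθ, hD, rpow_sq_half _ hApos.le, mul_pow,
    mul_div_cancel_right₀ _ (pow_ne_zero _ hApos.ne')]
  have hAne : A ≠ 0 := hA0.ne'
  field_simp

theorem stmt0 (k : ℕ) (r : ℝ) (hr0 : 0 ≤ r) (hr1 : r ≤ 1) :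
    ∫ θ in (0:ℝ)..Real.pi,
        (Real.sin θ) ^ k / (1 + r ^ 2 - 2 * r * Real.cos θ) ^ ((k : ℝ) / 2)
      = sphereArea (k + 2) / sphereArea (k + 1) := by
  rcases eq_or_lt_of_le hr1 with heq | hlt
  · rw [heq, ← sin_pow_integral k, ← case_r_one k]
  · set K : ℝ → ℝ := fun θ => Real.sin θ ^ k / (1 + r^2 - 2*r*Real.cos θ) ^ ((k:ℝ)/2) with hK_def
    set g : ℝ → ℝ := fun φ => φ - Real.arcsin (r * Real.sin φ) with hg_def
    set g' : ℝ → ℝ := fun φ => 1 - r * Real.cos φ / Real.sqrt (1 - (r * Real.sin φ)^2) with hg'_def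
    have hA2 : ∀ x : ℝ, 0 < 1 - (r * Real.sin x)^2 := by
      intro x
      have h1 : r^2 < 1 := by nlinarith
      have h2 : Real.sin x ^ 2 ≤ 1 := Real.sin_sq_le_one x
      nlinarith [mul_nonneg (sq_nonneg r) (sub_nonneg.mpr h2)]
    have hAne : ∀ x : ℝ, Real.sqrt (1 - (r*Real.sin x)^2) ≠ 0 :=
      fun x => (Real.sqrt_pos.mpr (hA2 x)).ne'
    have hderiv : ∀ x ∈ Set.uIcc (0:ℝ) π, HasDerivAt g (g' x) x := by
      intro x _
      have hb : |r * Real.sin x| < 1 := by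
        rw [abs_mul, abs_of_nonneg hr0]
        nlinarith [Real.abs_sin_le_one x, abs_nonneg (Real.sin x)]
      obtain ⟨hb1, hb2⟩ := abs_lt.mp hb
      have harc : HasDerivAt (fun y => Real.arcsin (r * Real.sin y))
          (1 / Real.sqrt (1 - (r*Real.sin x)^2) * (r * Real.cos x)) x := by
        have hinner : HasDerivAt (fun y => r * Real.sin y) (r * Real.cos x) x :=
          (Real.hasDerivAt_sin x).const_mul r
        exact (Real.hasDerivAt_arcsin hb1.ne' hb2.ne).comp x hinner
      have h := (hasDerivAt_id x).sub harc
      refine HasDerivAt.congr_deriv (f := g) h ?_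
      simp only [hg'_def]
      ring
    have hg'cont : ContinuousOn g' (Set.uIcc (0:ℝ) π) := by
      apply Continuous.continuousOn
      apply continuous_const.sub
      exact (continuous_const.mul Real.continuous_cos).div
        (Real.continuous_sqrt.comp
          (continuous_const.sub ((continuous_const.mul Real.continuous_sin).pow 2))) hAne
    have hden : ∀ θ : ℝ, 0 < 1 + r^2 - 2*r*Real.cos θ := by
      intro θ
      nlinarith [Real.cos_le_one θ, Real.neg_one_le_cos θ, sq_nonneg (1 - r)]
    have hKcont : Continuous K := by
      apply Continuous.div (Real.continuous_sin.pow k)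
      · exact Continuous.rpow_const
          (continuous_const.sub (continuous_const.mul Real.continuous_cos))
          (fun x => Or.inr (by positivity))
      · intro x
        exact (Real.rpow_pos_of_pos (hden x) _).ne'
    have hsub := intervalIntegral.integral_comp_smul_deriv hderiv hg'cont hKcont
    have hg0 : g 0 = 0 := by simp [hg_def]
    have hgπ : g π = π := by simp [hg_def]
    rw [hg0, hgπ] at hsub
    rw [show (∫ θ in (0:ℝ)..π, (Real.sin θ) ^ k / (1 + r ^ 2 - 2 * r * Real.cos θ) ^ ((k:ℝ)/2))
        = ∫ θ in (0:ℝ)..π, K θ from rfl, ← hsub]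
    have hcongr : Set.EqOn (fun x => g' x • (K ∘ g) x)
        (fun x => Real.sin x ^ k
          - r * (Real.sin x ^ k * Real.cos x / Real.sqrt (1 - (r*Real.sin x)^2)))
        (Set.uIcc (0:ℝ) π) := by
      intro x hx
      simp only [Function.comp, smul_eq_mul, hg_def, hg'_def, hK_def]
      exact key_pointwise k r hr0 hlt hx
    rw [intervalIntegral.integral_congr hcongr]
    have hcont2 : Continuous
        (fun x => Real.sin x ^ k * Real.cos x / Real.sqrt (1 - (r*Real.sin x)^2)) := by
      exact ((Real.continuous_sin.pow k).mul Real.continuous_cos).div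
        (Real.continuous_sqrt.comp
          (continuous_const.sub ((continuous_const.mul Real.continuous_sin).pow 2))) hAne
    rw [intervalIntegral.integral_sub (f := fun x => Real.sin x ^ k)
      (g := fun x => r * (Real.sin x ^ k * Real.cos x / Real.sqrt (1 - (r*Real.sin x)^2)))
      ((Real.continuous_sin.pow k).intervalIntegrable 0 π)
      ((continuous_const.mul hcont2).intervalIntegrable 0 π)]
    have hzero : ∫ x in (0:ℝ)..π,
        r * (Real.sin x ^ k * Real.cos x / Real.sqrt (1 - (r*Real.sin x)^2)) = 0 := by
      set f : ℝ → ℝ := fun x => Real.sin x ^ k * Real.cos x / Real.sqrt (1 - (r*Real.sin x)^2)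
        with hf_def
      have hodd : ∀ x, f (π - x) = - f x := by
        intro x
        simp only [hf_def, Real.sin_pi_sub, Real.cos_pi_sub]
        ring
      have h := intervalIntegral.integral_comp_sub_left (a := (0:ℝ)) (b := π) f π
      rw [sub_self, sub_zero] at h
      have h2 : ∫ x in (0:ℝ)..π, f (π - x) = - ∫ x in (0:ℝ)..π, f x := by
        simp_rw [hodd]
        exact intervalIntegral.integral_neg
      have hzero' : ∫ x in (0:ℝ)..π, f x = 0 := by linarith [h.symm.trans h2]
      rw [intervalIntegral.integral_const_mul, hzero', mul_zero]
    rw [hzero, sub_zero, sin_pow_integral]
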